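/- Let x be a solution of (E) with x(t) > 0 and x′(t) ≥ 0 for all t ≥ τ. Then for every k and every n ≥ 1, r(t_{k+n})·x′(t_{k+n})/φ(x(ζ_{k+n−1})) ≤ r(t_k)·x′(t_k)/φ(x(ζ_k)) − ∫_{t_k}^{t_{k+n}} p(s) ds. -/

import Mathlib

open MeasureTheory Set Filter

theorem stmt9
    (t ζ : ℕ → ℝ) (ht_mono : StrictMono t)
    (ht_top : Tendsto t atTop atTop)
    (hζ : ∀ k : ℕ, ζ k ∈ Icc (t k) (t (k+1)))
    (r : ℝ → ℝ) (hr_cont : ContinuousOn r (Ici (t 0)))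
    (hr_pos : ∀ s ∈ Ici (t 0), 0 < r s)
    (f : ℝ → ℝ → ℝ)
    (hf_cont : ContinuousOn (fun q : ℝ × ℝ => f q.1 q.2) ((Ici (t 0)) ×ˢ (univ : Set ℝ)))
    (hf_sign : ∀ s ∈ Ici (t 0), ∀ y : ℝ, y ≠ 0 → 0 < y * f s y)
    (x x' : ℝ → ℝ)
    (hx_deriv : ∀ s ∈ Ici (t 0), HasDerivAt x (x' s) s)
    (hx'_cont : ContinuousOn x' (Ici (t 0)))
    (hE : ∀ k : ℕ, ∀ s ∈ Ioo (t k) (t (k+1)),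
      HasDerivAt (fun u => r u * x' u) (-(f s (x (ζ k)))) s)
    (p : ℝ → ℝ) (hp_cont : ContinuousOn p (Ici (t 0)))
    (hp_nonneg : ∀ s ∈ Ici (t 0), 0 ≤ p s)
    (φ : ℝ → ℝ) (hφ_smooth : ContDiff ℝ 1 φ) (hφ_mono : Monotone φ)
    (hφ_sign : ∀ y : ℝ, y ≠ 0 → 0 < y * φ y)
    (hfp_pos : ∀ s ∈ Ici (t 0), ∀ y : ℝ, 0 < y → p s * φ y ≤ f s y)
    (hfp_neg : ∀ s ∈ Ici (t 0), ∀ y : ℝ, y < 0 → f s y ≤ p s * φ y)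
    (hx_pos : ∀ s ∈ Ici (t 0), 0 < x s)
    (hx'_nonneg : ∀ s ∈ Ici (t 0), 0 ≤ x' s) :
    ∀ k n : ℕ, 1 ≤ n →
      r (t (k+n)) * x' (t (k+n)) / φ (x (ζ (k+n-1))) ≤
        r (t k) * x' (t k) / φ (x (ζ k)) - ∫ s in t k..t (k+n), p s := by
  have ht0 : ∀ j : ℕ, t 0 ≤ t j := fun j => ht_mono.monotone (Nat.zero_le j)
  have hζ0 : ∀ j : ℕ, t 0 ≤ ζ j := fun j => le_trans (ht0 j) (hζ j).1
  have hζIci : ∀ j : ℕ, ζ j ∈ Ici (t 0) := fun j => hζ0 j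
  have hIcc_sub : ∀ j : ℕ, Icc (t j) (t (j+1)) ⊆ Ici (t 0) := fun j =>
    fun s hs => le_trans (ht0 j) hs.1
  -- positivity of φ at x(ζ j)
  have hφpos : ∀ j : ℕ, 0 < φ (x (ζ j)) := by
    intro j
    have hx0 : 0 < x (ζ j) := hx_pos _ (hζIci j)
    have h := hφ_sign (x (ζ j)) (ne_of_gt hx0)
    rcases mul_pos_iff.mp h with ⟨_, hp⟩ | ⟨hl, _⟩
    · exact hp
    · linarith
  -- x is monotone on Ici (t 0)
  have hx_mono : MonotoneOn x (Ici (t 0)) := by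
    apply monotoneOn_of_deriv_nonneg (convex_Ici _)
    · exact fun s hs => (hx_deriv s hs).continuousAt.continuousWithinAt
    · intro s hs
      rw [interior_Ici] at hs
      exact (hx_deriv s (mem_Ici.mpr (le_of_lt hs))).differentiableAt.differentiableWithinAt
    · intro s hs
      rw [interior_Ici] at hs
      rw [(hx_deriv s (mem_Ici.mpr (le_of_lt hs))).deriv]
      exact hx'_nonneg s (mem_Ici.mpr (le_of_lt hs))
  -- φ(x ζ j) ≤ φ(x ζ (j+1))
  have hφ_step : ∀ j : ℕ, φ (x (ζ j)) ≤ φ (x (ζ (j+1))) := by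
    intro j
    apply hφ_mono
    exact hx_mono (hζIci j) (hζIci (j+1)) (le_trans (hζ j).2 (hζ (j+1)).1)
  -- p interval integrable
  have hpInt : ∀ a b : ℕ, a ≤ b → IntervalIntegrable p volume (t a) (t b) := by
    intro a b hab
    apply ContinuousOn.intervalIntegrable
    rw [uIcc_of_le (ht_mono.monotone hab)]
    exact hp_cont.mono (fun s hs => le_trans (ht0 a) hs.1)
  -- key step inequality
  have key : ∀ j : ℕ, r (t (j+1)) * x' (t (j+1)) ≤
      r (t j) * x' (t j) - φ (x (ζ j)) * ∫ s in t j..t (j+1), p s := by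
    intro j
    have hle : t j ≤ t (j+1) := le_of_lt (ht_mono (lt_add_one j))
    have hIcc : Icc (t j) (t (j+1)) ⊆ Ici (t 0) := hIcc_sub j
    have hg_cont : ContinuousOn (fun u => r u * x' u) (Icc (t j) (t (j+1))) :=
      (hr_cont.mul hx'_cont).mono hIcc
    have hfc0 : ContinuousOn (fun s => f s (x (ζ j))) (Icc (t j) (t (j+1))) := by
      have : ContinuousOn (fun s : ℝ => (s, x (ζ j))) (Icc (t j) (t (j+1))) :=
        (continuous_id.prodMk continuous_const).continuousOn
      exact hf_cont.comp this (fun s hs => ⟨hIcc hs, mem_univ _⟩)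
    have hfc : ContinuousOn (fun s => -(f s (x (ζ j)))) (Icc (t j) (t (j+1))) := hfc0.neg
    have hfInt : IntervalIntegrable (fun s => -(f s (x (ζ j)))) volume (t j) (t (j+1)) := by
      apply ContinuousOn.intervalIntegrable
      rwa [uIcc_of_le hle]
    have hftc := intervalIntegral.integral_eq_sub_of_hasDeriv_right_of_le hle hg_cont
      (fun s hs => ((hE j s hs).hasDerivWithinAt)) hfInt
    have hxζ : 0 < x (ζ j) := hx_pos _ (hζIci j)
    have hmono : ∫ s in t j..t (j+1), p s * φ (x (ζ j)) ≤
        ∫ s in t j..t (j+1), f s (x (ζ j)) := by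
      apply intervalIntegral.integral_mono_on hle
      · exact (hpInt j (j+1) (Nat.le_succ j)).mul_const _
      · apply ContinuousOn.intervalIntegrable
        rwa [uIcc_of_le hle]
      · intro s hs
        exact hfp_pos s (hIcc hs) _ hxζ
    have hval : ∫ s in t j..t (j+1), p s * φ (x (ζ j)) = φ (x (ζ j)) * ∫ s in t j..t (j+1), p s := by
      rw [intervalIntegral.integral_mul_const]; ring
    have hneg : ∫ s in t j..t (j+1), -(f s (x (ζ j))) = -∫ s in t j..t (j+1), f s (x (ζ j)) :=
      intervalIntegral.integral_neg
    rw [hneg] at hftc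
    -- hftc : -∫ f = g(t(j+1)) - g(t j)
    have : r (t (j+1)) * x' (t (j+1)) = r (t j) * x' (t j) - ∫ s in t j..t (j+1), f s (x (ζ j)) := by
      have := hftc
      linarith [hftc]
    rw [this]
    rw [hval] at hmono
    linarith
  -- nonnegativity of R
  have hRnn : ∀ j : ℕ, 0 ≤ r (t j) * x' (t j) := fun j =>
    mul_nonneg (le_of_lt (hr_pos _ (ht0 j))) (hx'_nonneg _ (ht0 j))
  -- divided step
  have dkey : ∀ j : ℕ, r (t (j+1)) * x' (t (j+1)) / φ (x (ζ j)) ≤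
      r (t j) * x' (t j) / φ (x (ζ j)) - ∫ s in t j..t (j+1), p s := by
    intro j
    have hφ := hφpos j
    rw [div_sub' (ne_of_gt hφ), div_le_div_iff₀ hφ hφ]
    have := key j
    nlinarith [key j]
  intro k n hn
  induction n, hn using Nat.le_induction with
  | base =>
    simpa using dkey k
  | succ n hn IH =>
    have hidx : k + (n+1) - 1 = (k + n - 1) + 1 := by omega
    have hidx2 : k + (n+1) = (k + n) + 1 := by ring
    have h1 : r (t (k+n+1)) * x' (t (k+n+1)) / φ (x (ζ (k+n))) ≤
        r (t (k+n)) * x' (t (k+n)) / φ (x (ζ (k+n))) - ∫ s in t (k+n)..t (k+n+1), p s :=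
      dkey (k+n)
    have hφle : φ (x (ζ (k+n-1))) ≤ φ (x (ζ (k+n))) := by
      have := hφ_step (k+n-1)
      have h : k + n - 1 + 1 = k + n := by omega
      rwa [h] at this
    have h2 : r (t (k+n)) * x' (t (k+n)) / φ (x (ζ (k+n))) ≤
        r (t (k+n)) * x' (t (k+n)) / φ (x (ζ (k+n-1))) := by
      gcongr
      exacts [hRnn (k+n), hφpos (k+n-1)]
    have hsplit : (∫ s in t k..t (k+n), p s) + ∫ s in t (k+n)..t (k+n+1), p s
        = ∫ s in t k..t (k+n+1), p s :=
      intervalIntegral.integral_add_adjacent_intervals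
        (hpInt k (k+n) (Nat.le_add_right k n)) (hpInt (k+n) (k+n+1) (Nat.le_succ _))
    have hgoal : k + (n+1) - 1 = k + n := by omega
    rw [hgoal, hidx2]
    linarith
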